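/- ∑_{k=0}^∞ (25k − 3)/(2^k · C(3k,k)) = π/2. -/

import Mathlib

open intervalIntegral MeasureTheory Real Set ENNReal NNReal

lemma beta_nat (b a : ℕ) :
    ∫ x in (0:ℝ)..1, x ^ a * (1 - x) ^ b
      = (a.factorial * b.factorial : ℝ) / (a + b + 1).factorial := by
  induction b generalizing a with
  | zero =>
      have hfa : (a.factorial : ℝ) ≠ 0 := by positivity
      simp only [pow_zero, mul_one, integral_pow, one_pow, Nat.add_zero, Nat.factorial_succ,
        Nat.factorial_zero, Nat.cast_one]
      rw [zero_pow (by omega), sub_zero]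
      field_simp
      push_cast; ring
  | succ b ih =>
      have hderiv : ∀ x ∈ uIcc (0:ℝ) 1,
          HasDerivAt (fun y : ℝ => y ^ (a+1) * (1-y) ^ (b+1))
            (((a:ℝ)+1) * (x ^ a * (1-x) ^ (b+1)) - ((b:ℝ)+1) * (x ^ (a+1) * (1-x) ^ b)) x := by
        intro x _
        have h1 : HasDerivAt (fun y : ℝ => y ^ (a+1)) (((a:ℝ)+1) * x ^ a) x := by
          simpa using hasDerivAt_pow (a+1) x
        have h2 : HasDerivAt (fun y : ℝ => (1-y) ^ (b+1)) (-(((b:ℝ)+1) * (1-x) ^ b)) x := by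
          have hin : HasDerivAt (fun y : ℝ => 1 - y) (-1) x := by
            simpa using (hasDerivAt_id x).const_sub (1:ℝ)
          have := (hasDerivAt_pow (b+1) (1-x)).comp x hin
          refine this.congr_deriv ?_
          rw [Nat.add_sub_cancel]; push_cast; ring
        have := h1.mul h2
        refine this.congr_deriv ?_
        ring
      have hint : ∀ (c d : ℕ), IntervalIntegrable (fun x : ℝ => x ^ c * (1-x) ^ d) volume 0 1 := by
        intro c d
        exact (Continuous.mul (continuous_pow c) ((continuous_const.sub continuous_id).pow d)).intervalIntegrable 0 1
      have h0 : (∫ x in (0:ℝ)..1,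
          (((a:ℝ)+1) * (x ^ a * (1-x) ^ (b+1)) - ((b:ℝ)+1) * (x ^ (a+1) * (1-x) ^ b))) = 0 := by
        rw [integral_eq_sub_of_hasDerivAt hderiv]
        · simp
        · exact (((hint a (b+1)).const_mul _).sub ((hint (a+1) b).const_mul _))
      rw [integral_sub ((hint a (b+1)).const_mul _) ((hint (a+1) b).const_mul _),
        intervalIntegral.integral_const_mul, intervalIntegral.integral_const_mul, sub_eq_zero] at h0
      have hb := ih (a+1)
      rw [hb] at h0
      have ha1 : ((a:ℝ)+1) ≠ 0 := by positivity
      field_simp at h0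
      rw [eq_div_iff (by positivity : ((a + (b+1) + 1).factorial : ℝ) ≠ 0)]
      have e1 : a + (b+1) + 1 = (a + 1 + b + 1) := by omega
      rw [e1]
      have fa : (((a:ℕ)+1).factorial : ℝ) = ((a:ℝ)+1) * a.factorial := by
        rw [Nat.factorial_succ]; push_cast; ring
      have fb : (((b:ℕ)+1).factorial : ℝ) = ((b:ℝ)+1) * b.factorial := by
        rw [Nat.factorial_succ]; push_cast; ring
      rw [fa] at h0
      rw [fb]
      apply mul_left_cancel₀ ha1
      linear_combination h0

lemma term_eq (k : ℕ) : (25 * (k : ℝ) - 3) / (2 ^ k * (Nat.choose (3 * k) k : ℝ))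
    = ∫ x in (0:ℝ)..1, (25 * (k:ℝ) - 3) * (3 * (k:ℝ) + 1) * (x * (1-x)^2 / 2) ^ k := by
  have he : (fun x : ℝ => (25 * (k:ℝ) - 3) * (3 * (k:ℝ) + 1) * (x * (1-x)^2 / 2) ^ k)
      = fun x : ℝ => ((25 * (k:ℝ) - 3) * (3 * (k:ℝ) + 1) * (1/2)^k) * (x ^ k * (1-x) ^ (2*k)) := by
    funext x
    rw [show x*(1-x)^2/2 = x * ((1-x)^2 * (1/2)) by ring, mul_pow, mul_pow, ← pow_mul]
    ring
  rw [he, intervalIntegral.integral_const_mul, beta_nat]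
  have hch : ((3*k).choose k : ℝ) * (k.factorial * (2*k).factorial) = ((3*k).factorial : ℝ) := by
    have := Nat.choose_mul_factorial_mul_factorial (Nat.le_mul_of_pos_left k (by norm_num) : k ≤ 3 * k)
    have h2 : 3 * k - k = 2 * k := by omega
    rw [h2] at this
    push_cast [← this]
    ring
  have hf : ((k + 2*k + 1).factorial : ℝ) = (3*(k:ℝ)+1) * (3*k).factorial := by
    have h3 : k + 2*k + 1 = (3*k) + 1 := by omega
    rw [h3, Nat.factorial_succ]; push_cast; ring
  rw [hf]
  have hne1 : ((3*k).choose k : ℝ) ≠ 0 :=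
    Nat.cast_ne_zero.mpr (Nat.choose_pos (by omega)).ne'
  have hne2 : ((3*k).factorial : ℝ) ≠ 0 := by positivity
  have hne3 : (3*(k:ℝ)+1) ≠ 0 := by positivity
  have key : (k.factorial * (2*k).factorial : ℝ) / ((3*(k:ℝ)+1) * (3*k).factorial)
      = 1 / ((3*(k:ℝ)+1) * ((3*k).choose k : ℝ)) := by
    rw [div_eq_div_iff (by positivity) (by positivity)]
    linear_combination (3*(k:ℝ)+1) * hch
  rw [key]
  have h2k : (2:ℝ)^k ≠ 0 := by positivity
  field_simp
  have h12 : (1/2:ℝ)^k * 2^k = 1 := by rw [← mul_pow]; norm_num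
  linear_combination (3 - 25*(k:ℝ)) * h12

lemma choose_two_cast (n : ℕ) : (((n+2).choose 2 : ℕ) : ℝ) = ((n:ℝ)+1) * ((n:ℝ)+2) / 2 := by
  have h : 2 * ((n+2).choose 2) = (n+1) * (n+2) := by
    have h2 := Nat.add_one_mul_choose_eq (n+1) 1
    simp only [Nat.choose_one_right, Nat.succ_eq_add_one,
      show n+1+1 = n+2 from rfl, show 1+1 = 2 from rfl] at h2
    linarith [h2, Nat.mul_comm (n+1) (n+2)]
  have := congrArg (fun m : ℕ => (m : ℝ)) h
  push_cast at this
  linarith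

lemma tsum_pointwise {x : ℝ} (hx0 : 0 ≤ x) (hx1 : x ≤ 1) :
    ∑' k : ℕ, (25*(k:ℝ)-3) * (3*(k:ℝ)+1) * (x*(1-x)^2/2)^k
      = 1200/((2-x)^3*(x^2+1)^3) - 836/((2-x)^2*(x^2+1)^2) + 112/((2-x)*(x^2+1)) := by
  set u : ℝ := x*(1-x)^2/2 with hu_def
  have hu0 : 0 ≤ u := by
    have : (0:ℝ) ≤ (1-x)^2 := sq_nonneg _
    positivity
  have hu_half : u ≤ 1/2 := by
    have h2 : (1-x)^2 ≤ 1 := by nlinarith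
    nlinarith
  have hu : ‖u‖ < 1 := by
    rw [Real.norm_eq_abs, abs_of_nonneg hu0]; linarith
  have h2 := hasSum_choose_mul_geometric_of_norm_lt_one 2 hu
  have h1 := hasSum_choose_mul_geometric_of_norm_lt_one 1 hu
  have h0 := hasSum_geometric_of_norm_lt_one hu
  have htot := ((h2.mul_left 150).sub (h1.mul_left 209)).add (h0.mul_left 56)
  have heq : (fun n : ℕ => 150 * (((n+2).choose 2 : ℕ):ℝ) * u^n - 209 * (((n+1).choose 1:ℕ):ℝ) * u^n
      + 56 * u^n) = fun n : ℕ => (25*(n:ℝ)-3) * (3*(n:ℝ)+1) * u^n := by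
    funext n
    rw [choose_two_cast, Nat.choose_one_right]
    push_cast
    ring
  have hne : (2:ℝ) - x ≠ 0 := by linarith
  have hx2 : (x:ℝ)^2 + 1 ≠ 0 := by positivity
  have h1u : 1 - u = (2-x)*(x^2+1)/2 := by rw [hu_def]; ring
  have := htot.tsum_eq
  simp only [mul_assoc] at this heq ⊢
  rw [show (fun n : ℕ => 150 * ((((n+2).choose 2 : ℕ):ℝ) * u^n) - 209 * ((((n+1).choose 1:ℕ):ℝ) * u^n)
      + 56 * u^n) = fun n : ℕ => (25*(n:ℝ)-3) * ((3*(n:ℝ)+1) * u^n) by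
    funext n; rw [choose_two_cast, Nat.choose_one_right]; push_cast; ring] at this
  rw [this, h1u]
  rw [div_pow, div_pow]
  field_simp
  ring

noncomputable def Gfun (x : ℝ) : ℝ :=
  2 * Real.arctan x + (2*x^5 + 48*x^4 - 138*x^3 + 108*x^2 - 20*x)/((2-x)^2*(x^2+1)^2)

lemma integral_closed_form :
    ∫ x in (0:ℝ)..1, (1200/((2-x)^3*(x^2+1)^3) - 836/((2-x)^2*(x^2+1)^2)
      + 112/((2-x)*(x^2+1))) = Real.pi / 2 := by
  have huIcc : uIcc (0:ℝ) 1 = Icc 0 1 := uIcc_of_le zero_le_one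
  have hderiv : ∀ x ∈ uIcc (0:ℝ) 1, HasDerivAt Gfun
      (1200/((2-x)^3*(x^2+1)^3) - 836/((2-x)^2*(x^2+1)^2) + 112/((2-x)*(x^2+1))) x := by
    intro x hx
    rw [huIcc, mem_Icc] at hx
    have hne : (2:ℝ) - x ≠ 0 := by linarith [hx.2]
    have hx2 : (x:ℝ)^2 + 1 ≠ 0 := by positivity
    have hQne : ((2-x)^2*(x^2+1)^2 : ℝ) ≠ 0 := by positivity
    have hP : HasDerivAt (fun y:ℝ => 2*y^5 + 48*y^4 - 138*y^3 + 108*y^2 - 20*y)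
        (10*x^4 + 192*x^3 - 414*x^2 + 216*x - 20) x := by
      have h := (((((hasDerivAt_pow 5 x).const_mul (2:ℝ)).add
        ((hasDerivAt_pow 4 x).const_mul (48:ℝ))).sub
        ((hasDerivAt_pow 3 x).const_mul (138:ℝ))).add
        ((hasDerivAt_pow 2 x).const_mul (108:ℝ))).sub
        ((hasDerivAt_id x).const_mul (20:ℝ))
      simp only [id_eq] at h
      refine h.congr_deriv ?_
      push_cast; ring
    have hq1 : HasDerivAt (fun y:ℝ => (2-y)^2) (-(2*(2-x))) x := by
      have h := (hasDerivAt_pow 2 ((2:ℝ)-x)).comp x ((hasDerivAt_const x (2:ℝ)).sub (hasDerivAt_id x))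
      refine h.congr_deriv ?_
      push_cast; ring
    have hq2 : HasDerivAt (fun y:ℝ => (y^2+1)^2) (2*(x^2+1)*(2*x)) x := by
      have h := (hasDerivAt_pow 2 (x^2+(1:ℝ))).comp x ((hasDerivAt_pow 2 x).add_const 1)
      refine h.congr_deriv ?_
      push_cast; ring
    have hQ : HasDerivAt (fun y:ℝ => (2-y)^2*(y^2+1)^2)
        ((-(2*(2-x)))*(x^2+1)^2 + (2-x)^2*(2*(x^2+1)*(2*x))) x := hq1.mul hq2
    have hfrac := hP.div hQ hQne
    have harc := (Real.hasDerivAt_arctan x).const_mul (2:ℝ)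
    have h := harc.add hfrac
    refine h.congr_deriv ?_
    field_simp
    ring
  have hcont : ContinuousOn (fun x : ℝ => 1200/((2-x)^3*(x^2+1)^3) - 836/((2-x)^2*(x^2+1)^2)
      + 112/((2-x)*(x^2+1))) (uIcc 0 1) := by
    rw [huIcc]
    have hne : ∀ x ∈ Icc (0:ℝ) 1, (2:ℝ) - x ≠ 0 := by
      intro x hx; rw [mem_Icc] at hx; linarith [hx.2]
    apply ContinuousOn.add
    apply ContinuousOn.sub
    · exact continuousOn_const.div (by fun_prop) (fun x hx => by
        have := hne x hx; have : (0:ℝ) < (2-x) := by rw [mem_Icc] at hx; linarith [hx.2]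
        positivity)
    · exact continuousOn_const.div (by fun_prop) (fun x hx => by
        have : (0:ℝ) < (2-x) := by rw [mem_Icc] at hx; linarith [hx.2]
        positivity)
    · exact continuousOn_const.div (by fun_prop) (fun x hx => by
        have : (0:ℝ) < (2-x) := by rw [mem_Icc] at hx; linarith [hx.2]
        positivity)
  rw [integral_eq_sub_of_hasDerivAt hderiv (hcont.intervalIntegrable)]
  unfold Gfun
  rw [Real.arctan_one, Real.arctan_zero]
  norm_num
  ring

lemma swap_lemma :
    ∑' k : ℕ, ∫ x in Ioc (0:ℝ) 1, (25*(k:ℝ)-3) * (3*(k:ℝ)+1) * (x*(1-x)^2/2)^k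
      = ∫ x in Ioc (0:ℝ) 1, ∑' k : ℕ, (25*(k:ℝ)-3) * (3*(k:ℝ)+1) * (x*(1-x)^2/2)^k := by
  have hmeas : ∀ k : ℕ, AEStronglyMeasurable
      (fun x : ℝ => (25*(k:ℝ)-3) * (3*(k:ℝ)+1) * (x*(1-x)^2/2)^k)
      (volume.restrict (Ioc (0:ℝ) 1)) := by
    intro k
    exact (by fun_prop : Continuous fun x : ℝ =>
      (25*(k:ℝ)-3) * (3*(k:ℝ)+1) * (x*(1-x)^2/2)^k).aestronglyMeasurable
  set g : ℕ → ℝ := fun k => (75*(k:ℝ)^2+34*(k:ℝ)+3)*(1/2)^k with hg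
  have hgnn : ∀ k, 0 ≤ g k := by intro k; positivity
  have hgsum : Summable g := by
    have hr : ‖(1/2 : ℝ)‖ < 1 := by
      rw [Real.norm_eq_abs, abs_of_nonneg (by norm_num : (0:ℝ) ≤ 1/2)]; norm_num
    have s2 := summable_pow_mul_geometric_of_norm_lt_one 2 hr
    have s1 := summable_pow_mul_geometric_of_norm_lt_one 1 hr
    have s0 := summable_geometric_of_norm_lt_one hr
    have := ((s2.mul_left 75).add (s1.mul_left 34)).add (s0.mul_left 3)
    apply this.congr
    intro n; simp [hg]; ring
  have hper : ∀ k : ℕ, ∫⁻ x, ‖(25*(k:ℝ)-3) * (3*(k:ℝ)+1) * (x*(1-x)^2/2)^k‖₊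
      ∂(volume.restrict (Ioc (0:ℝ) 1)) ≤ ENNReal.ofReal (g k) := by
    intro k
    have hb : ∀ x ∈ Ioc (0:ℝ) 1,
        (‖(25*(k:ℝ)-3) * (3*(k:ℝ)+1) * (x*(1-x)^2/2)^k‖₊ : ℝ≥0∞) ≤ ENNReal.ofReal (g k) := by
      intro x hx
      rw [← enorm_eq_nnnorm, ← ofReal_norm]
      apply ENNReal.ofReal_le_ofReal
      obtain ⟨hx0, hx1⟩ := hx
      have hu0 : 0 ≤ x*(1-x)^2/2 := by
        have : (0:ℝ) ≤ (1-x)^2 := sq_nonneg _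
        positivity
      have hu_half : x*(1-x)^2/2 ≤ 1/2 := by nlinarith [sq_nonneg (1-x)]
      have h1 : |25*(k:ℝ)-3| ≤ 25*(k:ℝ)+3 := by
        rw [abs_le]; constructor <;> [linarith [Nat.cast_nonneg (α := ℝ) k]; linarith]
      calc ‖(25*(k:ℝ)-3) * (3*(k:ℝ)+1) * (x*(1-x)^2/2)^k‖
          = |25*(k:ℝ)-3| * |3*(k:ℝ)+1| * |x*(1-x)^2/2|^k := by
            rw [Real.norm_eq_abs, abs_mul, abs_mul, abs_pow]
        _ ≤ (25*(k:ℝ)+3) * (3*(k:ℝ)+1) * (1/2)^k := by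
            have h2 : |3*(k:ℝ)+1| = 3*(k:ℝ)+1 := abs_of_nonneg (by positivity)
            have h3 : |x*(1-x)^2/2| ≤ 1/2 := by rw [abs_of_nonneg hu0]; exact hu_half
            have h3' : |x*(1-x)^2/2|^k ≤ (1/2:ℝ)^k := pow_le_pow_left₀ (abs_nonneg _) h3 k
            have hA : |25*(k:ℝ)-3| * |3*(k:ℝ)+1| ≤ (25*(k:ℝ)+3) * (3*(k:ℝ)+1) :=
              mul_le_mul h1 h2.le (abs_nonneg _) (by positivity)
            exact mul_le_mul hA h3' (pow_nonneg (abs_nonneg _) k) (by positivity)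
        _ = g k := by rw [hg]; ring
    calc ∫⁻ x, ‖(25*(k:ℝ)-3) * (3*(k:ℝ)+1) * (x*(1-x)^2/2)^k‖₊
          ∂(volume.restrict (Ioc (0:ℝ) 1))
        ≤ ∫⁻ _, ENNReal.ofReal (g k) ∂(volume.restrict (Ioc (0:ℝ) 1)) :=
          setLIntegral_mono measurable_const hb
      _ = ENNReal.ofReal (g k) * volume (Ioc (0:ℝ) 1) := by
          rw [setLIntegral_const]
      _ ≤ ENNReal.ofReal (g k) := by
          rw [Real.volume_Ioc]
          norm_num
  refine (integral_tsum hmeas ?_).symm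
  refine ne_top_of_le_ne_top ?_ (ENNReal.tsum_le_tsum hper)
  rw [← ENNReal.ofReal_tsum_of_nonneg hgnn hgsum]
  exact ENNReal.ofReal_ne_top

theorem stmt_3 :
    ∑' k : ℕ, (25 * (k : ℝ) - 3) / (2 ^ k * (Nat.choose (3 * k) k : ℝ)) = Real.pi / 2 := by
  have h1 : ∀ k : ℕ, (25 * (k : ℝ) - 3) / (2 ^ k * (Nat.choose (3 * k) k : ℝ))
      = ∫ x in Ioc (0:ℝ) 1, (25*(k:ℝ)-3) * (3*(k:ℝ)+1) * (x*(1-x)^2/2)^k := fun k =>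
    (term_eq k).trans (intervalIntegral.integral_of_le zero_le_one)
  rw [tsum_congr h1, swap_lemma]
  rw [setIntegral_congr_fun measurableSet_Ioc (fun x hx => tsum_pointwise hx.1.le hx.2)]
  rw [← intervalIntegral.integral_of_le zero_le_one]
  exact integral_closed_form
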